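/- For all real numbers u, v ≥ 0 (with the convention 0·log 0 = 0), the inequality u·log(u/v) − u + v ≥ (u − v)²/(2(u + v)) holds, where the left side is +∞ if v = 0 < u and the right side is interpreted as 0 if u = v = 0. -/

import Mathlib

/-- Scalar KL–quadratic inequality: for `u, v ≥ 0`,
`u·log(u/v) − u + v ≥ (u − v)²/(2(u + v))`.  The convention that the left
side is `+∞` when `v = 0 < u` makes that case trivially true, so it is
recorded by the hypothesis `0 < v ∨ u = 0`; when `u = v = 0` both sides
are `0` (in Lean `0/0 = 0` and `Real.log 0 = 0`). -/
theorem stmt2 (u v : ℝ) (hu : 0 ≤ u) (hv : 0 ≤ v) (hconv : 0 < v ∨ u = 0) :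
    (u - v) ^ 2 / (2 * (u + v)) ≤ u * Real.log (u / v) - u + v := by
  rcases eq_or_lt_of_le hu with h0 | hupos
  · -- u = 0
    subst h0
    simp only [zero_sub, zero_mul, sub_zero, zero_add]
    rcases eq_or_lt_of_le hv with h0 | hvpos
    · simp [← h0]
    · rw [div_le_iff₀ (by positivity)]
      nlinarith [sq_nonneg v]
  · -- u > 0, hence v > 0
    have hvpos : 0 < v := by
      rcases hconv with h | h
      · exact h
      · exact absurd h (ne_of_gt hupos)
    set a := Real.sqrt u with ha
    set b := Real.sqrt v with hb
    have hapos : 0 < a := Real.sqrt_pos.mpr hupos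
    have hbpos : 0 < b := Real.sqrt_pos.mpr hvpos
    have hau : a ^ 2 = u := Real.sq_sqrt hu
    have hbv : b ^ 2 = v := Real.sq_sqrt hv
    -- log bound: log (b/a) ≤ b/a - 1
    have hlog : Real.log (b / a) ≤ b / a - 1 :=
      Real.log_le_sub_one_of_pos (by positivity)
    have hlog2 : 2 * (1 - b / a) ≤ Real.log (u / v) := by
      have : Real.log (u / v) = 2 * Real.log (a / b) := by
        rw [Real.log_div (ne_of_gt hupos) (ne_of_gt hvpos),
            Real.log_div (ne_of_gt hapos) (ne_of_gt hbpos),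
            ← hau, ← hbv, Real.log_pow, Real.log_pow]
        push_cast
        ring
      rw [this]
      have : Real.log (a / b) = - Real.log (b / a) := by
        rw [← Real.log_inv]
        congr 1
        field_simp
      rw [this]
      linarith
    -- middle bound: (a-b)^2 ≤ u * log(u/v) - u + v
    have hmid : (a - b) ^ 2 ≤ u * Real.log (u / v) - u + v := by
      have h1 : u * (2 * (1 - b / a)) ≤ u * Real.log (u / v) :=
        mul_le_mul_of_nonneg_left hlog2 hu
      have h2 : u * (2 * (1 - b / a)) = 2 * a ^ 2 - 2 * a * b := by
        rw [← hau]; field_simp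
      nlinarith [h1]
    -- final bound: (u-v)^2 / (2(u+v)) ≤ (a-b)^2
    have hfin : (u - v) ^ 2 / (2 * (u + v)) ≤ (a - b) ^ 2 := by
      rw [div_le_iff₀ (by positivity)]
      nlinarith [sq_nonneg ((a - b) * (a - b)), sq_nonneg (a - b), sq_nonneg (a + b)]
    linarith
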